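/- Let l > 0. Suppose a C² function f on a neighborhood of infinity in ℝ^{n+1} has the harmonic asymptotic expansion at infinity with leading coefficient a₀ > 0. Then there exist λ₀ > 0 and R > 0 such that for every λ ≥ λ₀: f(x) > f(x^λ) for all x with x₁ < λ and x ∉ B_R(0), where x^λ = (2λ − x₁, x₂, …, x_{n+1}) is the reflection of x across the hyperplane {x₁ = λ}. -/

import Mathlib

open MeasureTheory Metric Filter Function Topology

/-- First-order partial derivative in the `i`-th coordinate direction. -/
noncomputable def pderiv' {m : ℕ} (i : Fin m) (f : EuclideanSpace ℝ (Fin m) → ℝ)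
    (x : EuclideanSpace ℝ (Fin m)) : ℝ :=
  fderiv ℝ f x (EuclideanSpace.single i 1)

/-- The degenerate elliptic operator `Δ̃_{n+1,a} u = Σ ∂²u/∂x_i² + ((2a−1)/x_{n+1}) ∂u/∂x_{n+1}`;
on the hyperplane `{x_{n+1} = 0}` it is interpreted by its continuous extension, which (for
functions even in `x_{n+1}`) equals `Σ ∂²u/∂x_i² + (2a−1) ∂²u/∂x_{n+1}²`. -/
noncomputable def deltaTilde (n : ℕ) (a : ℝ)
    (f : EuclideanSpace ℝ (Fin (n + 1)) → ℝ) (x : EuclideanSpace ℝ (Fin (n + 1))) : ℝ :=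
  (∑ i, pderiv' i (pderiv' i f) x) +
    (if x (Fin.last n) = 0 then (2 * a - 1) * pderiv' (Fin.last n) (pderiv' (Fin.last n) f) x
     else ((2 * a - 1) / x (Fin.last n)) * pderiv' (Fin.last n) f x)

/-- `(−Δ̃_{n+1,a})^k`. -/
noncomputable def negDeltaIter (n : ℕ) (a : ℝ) (k : ℕ)
    (f : EuclideanSpace ℝ (Fin (n + 1)) → ℝ) : EuclideanSpace ℝ (Fin (n + 1)) → ℝ :=
  (fun g x => -deltaTilde n a g x)^[k] f

/-- Evenness with respect to the last coordinate `x_{n+1}`. -/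
def EvenLast (n : ℕ) (f : EuclideanSpace ℝ (Fin (n + 1)) → ℝ) : Prop :=
  ∀ x : EuclideanSpace ℝ (Fin (n + 1)),
    f (WithLp.toLp 2 (Function.update x (Fin.last n) (-x (Fin.last n)))) = f x

/-- The weighted functions `v_i = |x_{n+1}|^{2a−1} (−Δ̃_{n+1,a})^i u` for `i < p`, and
`v_p = |x_{n+1}|^{2a−1} |x|^{−τ} u^α`. -/
noncomputable def vFun (n p : ℕ) (a τ α : ℝ) (u : EuclideanSpace ℝ (Fin (n + 1)) → ℝ)
    (i : ℕ) (x : EuclideanSpace ℝ (Fin (n + 1))) : ℝ :=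
  if i < p then |x (Fin.last n)| ^ (2 * a - 1) * negDeltaIter n a i u x
  else |x (Fin.last n)| ^ (2 * a - 1) * (‖x‖ ^ (-τ) * u x ^ α)

/-- `f` has a harmonic asymptotic expansion at infinity with exponent `l`, leading coefficient
`a₀` and first-order coefficients `aa`: in a neighborhood of infinity,
`f(x) = |x|^{−l}(a₀ + Σ aᵢ xᵢ/|x|²) + O(|x|^{−l−2})`,
`∂ᵢf(x) = −l a₀ xᵢ |x|^{−l−2} + O(|x|^{−l−2})` and `∂ᵢ∂ⱼ f(x) = O(|x|^{−l−2})`. -/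
def HarmonicExpansion (n : ℕ) (l : ℝ) (f : EuclideanSpace ℝ (Fin (n + 1)) → ℝ)
    (a₀ : ℝ) (aa : Fin (n + 1) → ℝ) : Prop :=
  ∃ C R₀ : ℝ, 0 < R₀ ∧ ∀ x : EuclideanSpace ℝ (Fin (n + 1)), R₀ ≤ ‖x‖ →
    |f x - ‖x‖ ^ (-l) * (a₀ + ∑ i, aa i * x i / ‖x‖ ^ 2)| ≤ C * ‖x‖ ^ (-l - 2) ∧
    (∀ i : Fin (n + 1),
      |pderiv' i f x + l * a₀ * x i * ‖x‖ ^ (-l - 2)| ≤ C * ‖x‖ ^ (-l - 2)) ∧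
    (∀ i j : Fin (n + 1), |pderiv' i (pderiv' j f) x| ≤ C * ‖x‖ ^ (-l - 2))

/-- The reflection `x^λ = (2λ − x₁, x₂, …, x_{n+1})` across the hyperplane `{x₁ = λ}`. -/
noncomputable def reflHyp (n : ℕ) (lam : ℝ) (x : EuclideanSpace ℝ (Fin (n + 1))) :
    EuclideanSpace ℝ (Fin (n + 1)) :=
  WithLp.toLp 2 (Function.update x 0 (2 * lam - x 0))

lemma euc_norm_sq {N : ℕ} (x : EuclideanSpace ℝ (Fin N)) : ‖x‖ ^ 2 = ∑ i, (x i) ^ 2 := by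
  rw [EuclideanSpace.norm_eq, Real.sq_sqrt (by positivity)]
  simp [Real.norm_eq_abs, sq_abs]

lemma euc_abs_le_norm {N : ℕ} (x : EuclideanSpace ℝ (Fin N)) (i : Fin N) : |x i| ≤ ‖x‖ := by
  have h1 : (x i) ^ 2 ≤ ‖x‖ ^ 2 := by
    rw [euc_norm_sq]
    exact Finset.single_le_sum (fun j _ => sq_nonneg (x j)) (Finset.mem_univ i)
  have := Real.sqrt_le_sqrt h1
  rwa [Real.sqrt_sq_eq_abs, Real.sqrt_sq (norm_nonneg x)] at this

lemma euc_norm_sq_update {N : ℕ} (x y : EuclideanSpace ℝ (Fin (N+1))) (t : ℝ)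
    (hy : y = WithLp.toLp 2 (Function.update x 0 t)) :
    ‖y‖ ^ 2 = ‖x‖ ^ 2 - (x 0) ^ 2 + t ^ 2 := by
  subst hy
  rw [euc_norm_sq, euc_norm_sq]
  simp only [WithLp.ofLp_toLp]
  have h1 : ∀ i : Fin (N+1), (Function.update x 0 t i) ^ 2
      = Function.update (fun j => (x j) ^ 2) 0 (t ^ 2) i := by
    intro i
    by_cases h : i = 0 <;> simp [h, Function.update_apply]
  rw [Finset.sum_congr rfl (fun i _ => h1 i), Finset.sum_update_of_mem (Finset.mem_univ 0),
    ← Finset.add_sum_erase _ _ (Finset.mem_univ 0), Finset.sdiff_singleton_eq_erase]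
  ring

set_option maxHeartbeats 1000000 in
lemma case1 {n : ℕ} {l a₀ C0 R₀ R₁ : ℝ} (hl : 0 < l) (ha₀ : 0 < a₀)
    {f : EuclideanSpace ℝ (Fin (n+1)) → ℝ}
    (hreg : ContDiffOn ℝ 2 f {x : EuclideanSpace ℝ (Fin (n + 1)) | R₁ < ‖x‖})
    (hC : ∀ y : EuclideanSpace ℝ (Fin (n+1)), R₀ ≤ ‖y‖ →
      ∀ i, |pderiv' i f y + l * a₀ * y i * ‖y‖ ^ (-l - 2)| ≤ C0 * ‖y‖ ^ (-l - 2))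
    (x : EuclideanSpace ℝ (Fin (n+1))) (lam : ℝ) (hx0lt : x 0 < lam)
    (hσ : C0 / (l * a₀) < x 0) (hx0pos : 0 < x 0)
    (hxR₀ : R₀ ≤ ‖x‖) (hxR₁ : R₁ < ‖x‖) :
    f (WithLp.toLp 2 (Function.update x 0 (2 * lam - x 0))) < f x := by
  classical
  set e : EuclideanSpace ℝ (Fin (n+1)) := EuclideanSpace.single 0 1 with hedef
  set γ : ℝ → EuclideanSpace ℝ (Fin (n+1)) := fun t => x + (t - x 0) • e with hγdef
  have hγupd : ∀ t : ℝ, γ t = WithLp.toLp 2 (Function.update x 0 t) := by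
    intro t
    ext i
    rw [hγdef]
    by_cases h : i = 0
    · subst h
      simp [PiLp.add_apply, PiLp.smul_apply, EuclideanSpace.single_apply,
        Function.update_apply, hedef]
    · simp [h, PiLp.add_apply, PiLp.smul_apply, EuclideanSpace.single_apply,
        Function.update_apply, hedef]
  have hγ0 : ∀ t : ℝ, (γ t) 0 = t := by
    intro t; rw [hγupd t]; simp
  have hγnorm : ∀ t : ℝ, x 0 ≤ t → ‖x‖ ≤ ‖γ t‖ := by
    intro t ht
    have h2 := euc_norm_sq_update x (γ t) t (hγupd t)
    have ht2 : (x 0)^2 ≤ t^2 := pow_le_pow_left₀ hx0pos.le ht 2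
    have h3 : ‖x‖^2 ≤ ‖γ t‖^2 := by rw [h2]; linarith only [ht2]
    exact le_of_pow_le_pow_left₀ two_ne_zero (norm_nonneg _) h3
  set I : Set ℝ := Set.Icc (x 0) (2*lam - x 0) with hIdef
  have hIlt : x 0 < 2*lam - x 0 := by linarith only [hx0lt]
  have hγcont : Continuous γ := by
    rw [hγdef]
    exact continuous_const.add ((continuous_id.sub continuous_const).smul continuous_const)
  have hmem : ∀ t ∈ I, R₁ < ‖γ t‖ ∧ R₀ ≤ ‖γ t‖ ∧ x 0 ≤ t := by
    intro t ht
    have h1 : x 0 ≤ t := ht.1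
    have h2 := hγnorm t h1
    exact ⟨lt_of_lt_of_le hxR₁ h2, le_trans hxR₀ h2, h1⟩
  have hkey : ∀ t ∈ I, HasDerivAt (f ∘ γ) (pderiv' 0 f (γ t)) t ∧ pderiv' 0 f (γ t) < 0 := by
    intro t ht
    obtain ⟨hm1, hm2, hm3⟩ := hmem t ht
    have hdiff : DifferentiableAt ℝ f (γ t) := by
      have hopen : IsOpen {y : EuclideanSpace ℝ (Fin (n+1)) | R₁ < ‖y‖} :=
        isOpen_lt continuous_const continuous_norm
      exact (hreg.contDiffAt (hopen.mem_nhds hm1)).differentiableAt (by norm_num)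
    have hγder : HasDerivAt γ e t := by
      have hγeq : γ = fun t : ℝ => (t - x 0) • e + x := by
        funext t; rw [hγdef]; exact add_comm _ _
      rw [hγeq]
      have h1 : HasDerivAt (fun t : ℝ => t - x 0) 1 t := (hasDerivAt_id t).sub_const _
      have h2 := (h1.smul_const e).add_const x
      simpa using h2
    have hdf : HasDerivAt (f ∘ γ) (fderiv ℝ f (γ t) e) t :=
      hdiff.hasFDerivAt.comp_hasDerivAt t hγder
    have hpd : pderiv' 0 f (γ t) = fderiv ℝ f (γ t) e := by rw [pderiv', hedef]
    constructor
    · rw [hpd]; exact hdf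
    · have hest := hC (γ t) hm2 0
      rw [hγ0 t] at hest
      have hρpos : 0 < ‖x‖ := lt_of_lt_of_le hx0pos ((le_abs_self _).trans (euc_abs_le_norm x 0))
      have hγpos : 0 < ‖γ t‖ := lt_of_lt_of_le hρpos (hγnorm t hm3)
      have hP : 0 < ‖γ t‖ ^ (-l - 2) := Real.rpow_pos_of_pos hγpos _
      have hla : 0 < l * a₀ := by positivity
      have h6 : C0 < l * a₀ * t := by
        have h61 := (div_lt_iff₀ hla).1 hσ
        nlinarith [mul_le_mul_of_nonneg_left hm3 hla.le]
      have h7 := (abs_le.1 hest).2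
      have h8 : 0 < (l * a₀ * t - C0) * ‖γ t‖ ^ (-l - 2) :=
        mul_pos (by linarith only [h6]) hP
      nlinarith [h7, h8]
  have hanti : StrictAntiOn (f ∘ γ) I := by
    apply strictAntiOn_of_deriv_neg (convex_Icc _ _)
    · exact hreg.continuousOn.comp hγcont.continuousOn (fun t ht => (hmem t ht).1)
    · intro t ht
      rw [interior_Icc] at ht
      have ht' : t ∈ I := Set.Ioo_subset_Icc_self ht
      rw [(hkey t ht').1.deriv]
      exact (hkey t ht').2
  have hend1 : x 0 ∈ I := Set.left_mem_Icc.2 hIlt.le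
  have hend2 : 2*lam - x 0 ∈ I := Set.right_mem_Icc.2 hIlt.le
  have hfin := hanti hend1 hend2 hIlt
  simp only [Function.comp_apply] at hfin
  rw [hγupd, hγupd, Function.update_eq_self, WithLp.toLp_ofLp] at hfin
  exact hfin

lemma bernU {u q : ℝ} (hu0 : 0 ≤ u) (hq : 1 ≤ q) : 1 - q * (1 - u) ≤ u ^ q := by
  have hq0 : 0 < q := lt_of_lt_of_le one_pos hq
  have key := Real.geom_mean_le_arith_mean2_weighted
    (by positivity : (0:ℝ) ≤ 1/q)
    (by rw [sub_nonneg]; exact div_le_one_of_le₀ hq hq0.le : (0:ℝ) ≤ 1 - 1/q)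
    (Real.rpow_nonneg hu0 q) zero_le_one (by field_simp; ring)
  rw [Real.one_rpow, mul_one, ← Real.rpow_mul hu0, mul_one_div, div_self hq0.ne',
    Real.rpow_one] at key
  have h3 : u - 1 ≤ (1/q) * (u ^ q - 1) := by ring_nf; ring_nf at key; linarith
  have h4 := mul_le_mul_of_nonneg_left h3 hq0.le
  rw [← mul_assoc, mul_one_div, div_self hq0.ne', one_mul] at h4
  linarith

lemma bernL {u q : ℝ} (hu0 : 0 ≤ u) (hq0 : 0 < q) (hq1 : q ≤ 1) : u ^ q ≤ 1 - q * (1 - u) := by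
  have key := Real.geom_mean_le_arith_mean2_weighted hq0.le
    (by linarith : (0:ℝ) ≤ 1 - q) hu0 zero_le_one (by ring)
  rw [Real.one_rpow, mul_one] at key
  nlinarith [key]

lemma bernMain {u q : ℝ} (hu0 : 0 ≤ u) (hu1 : u ≤ 1) (hq0 : 0 < q) :
    min 1 q * (1 - u) ≤ 1 - u ^ q := by
  rcases le_or_gt q 1 with h | h
  · rw [min_eq_right h]
    have := bernL hu0 hq0 h
    linarith
  · rw [min_eq_left h.le, one_mul]
    have huq : u ^ q ≤ u := by
      rcases eq_or_lt_of_le hu0 with h0 | h0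
      · rw [← h0, Real.zero_rpow hq0.ne']
      · calc u ^ q ≤ u ^ (1:ℝ) := Real.rpow_le_rpow_of_exponent_ge h0 hu1 h.le
          _ = u := Real.rpow_one u
    linarith

lemma key_rpow {ρ : ℝ} (hρ : 0 < ρ) (c : ℝ) : ρ ^ (-c - 2) = ρ ^ (-c) / ρ ^ 2 := by
  rw [show (-c - 2 : ℝ) = -c + (-2) by ring, Real.rpow_add hρ, Real.rpow_neg hρ.le (2:ℝ),
    show ((2:ℝ)) = ((2:ℕ):ℝ) by norm_num, Real.rpow_natCast]
  rw [div_eq_mul_inv]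

set_option maxHeartbeats 2000000 in
lemma case2 {n : ℕ} {l a₀ C' R₀ : ℝ} (hl : 0 < l) (ha₀ : 0 < a₀) (hC'0 : 0 ≤ C')
    {f : EuclideanSpace ℝ (Fin (n+1)) → ℝ} (aa : Fin (n+1) → ℝ)
    (hC : ∀ y : EuclideanSpace ℝ (Fin (n+1)), R₀ ≤ ‖y‖ →
      |f y - ‖y‖ ^ (-l) * (a₀ + ∑ i, aa i * y i / ‖y‖ ^ 2)| ≤ C' * ‖y‖ ^ (-l - 2))
    (x : EuclideanSpace ℝ (Fin (n+1))) (lam : ℝ) (hx0lt : x 0 < lam) (hlampos : 0 < lam)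
    (hxR₀ : R₀ ≤ ‖x‖) (hρpos : 0 < ‖x‖)
    (hRx : 2*(∑ i, |aa i|)*(l+2) ≤ a₀*(min 1 (l/2))*‖x‖)
    (hlamA : 2*(∑ i, |aa i|) ≤ a₀*(min 1 (l/2))*lam)
    (h4C : 4*C' ≤ a₀*(min 1 (l/2))*(lam*(lam - x 0)))
    (h16C : 16*C' ≤ a₀*(min 1 (l/2))*‖x‖^2) :
    f (WithLp.toLp 2 (Function.update x 0 (2 * lam - x 0))) < f x := by
  classical
  set A : ℝ := ∑ i, |aa i| with hAdef
  have hA0 : 0 ≤ A := Finset.sum_nonneg fun i _ => abs_nonneg _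
  set m : ℝ := min 1 (l/2) with hmdef
  have hm0 : 0 < m := lt_min one_pos (by positivity)
  have hs : 0 < lam - x 0 := by linarith
  set s : ℝ := lam - x 0 with hsdef
  set x' : EuclideanSpace ℝ (Fin (n+1)) := WithLp.toLp 2 (Function.update x 0 (2*lam - x 0)) with hx'upd
  have hnorm' : ‖x'‖^2 = ‖x‖^2 + 4*lam*s := by
    rw [euc_norm_sq_update x x' (2*lam - x 0) hx'upd, hsdef]; ring
  have hρ'pos : 0 < ‖x'‖ := by
    rcases (norm_nonneg x').eq_or_lt with h | h
    · exfalso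
      have hz : ‖x'‖^2 = 0 := by rw [← h]; norm_num
      linarith only [hnorm', hz, mul_pos hlampos hs, pow_pos hρpos 2]
    · exact h
  have hρρ' : ‖x‖ ≤ ‖x'‖ := by
    by_contra h
    push_neg at h
    have h2 := pow_lt_pow_left₀ h (norm_nonneg x') two_ne_zero
    linarith only [h2, hnorm', mul_pos hlampos hs]
  have hρ'R₀ : R₀ ≤ ‖x'‖ := le_trans hxR₀ hρρ'
  set L : ℝ := ‖x‖ ^ (-l) with hLdef
  set L' : ℝ := ‖x'‖ ^ (-l) with hL'def
  set P : ℝ := ‖x‖ ^ (-l - 2) with hPdef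
  set P' : ℝ := ‖x'‖ ^ (-l - 2) with hP'def
  have hLpos : 0 < L := Real.rpow_pos_of_pos hρpos _
  have hL'pos : 0 < L' := Real.rpow_pos_of_pos hρ'pos _
  have hPpos : 0 < P := Real.rpow_pos_of_pos hρpos _
  have hP'pos : 0 < P' := Real.rpow_pos_of_pos hρ'pos _
  have hPL : P * ‖x‖^2 = L := by
    rw [hPdef, hLdef, key_rpow hρpos l]
    field_simp
  have hP'L' : P' * ‖x'‖^2 = L' := by
    rw [hP'def, hL'def, key_rpow hρ'pos l]
    field_simp
  have hL'L : L' ≤ L :=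
    Real.rpow_le_rpow_of_nonpos hρpos hρρ' (by linarith only [hl])
  have hP'P : P' ≤ P :=
    Real.rpow_le_rpow_of_nonpos hρpos hρρ' (by linarith only [hl])
  set u : ℝ := ‖x‖^2 / ‖x'‖^2 with hudef
  set W : ℝ := 1 - u with hWdef
  have hρ'2pos : 0 < ‖x'‖^2 := by positivity
  have hu0 : 0 ≤ u := by positivity
  have hu1 : u ≤ 1 := by
    rw [hudef, div_le_one hρ'2pos]
    linarith only [hnorm', mul_pos hlampos hs]
  have hW0 : 0 ≤ W := by rw [hWdef]; linarith only [hu1]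
  have hW2 : W * ‖x'‖^2 = 4*lam*s := by
    rw [hWdef, hudef]
    field_simp
    linarith only [hnorm']
  have hWpos : 0 < W := by
    have h4 : 0 < 4*lam*s := by positivity
    have h4 : 0 < W * ‖x'‖^2 := by rw [hW2]; positivity
    rcases mul_pos_iff.mp h4 with h5 | h5
    · exact h5.1
    · linarith only [h5.2, hρ'2pos]
  -- difference formula
  have hu_eq : ∀ c : ℝ, u ^ (c/2) = ‖x‖^c / ‖x'‖^c := by
    intro c
    have hd0 : (0:ℝ) ≤ ‖x‖/‖x'‖ := by positivity
    rw [hudef, ← div_pow, ← Real.rpow_natCast (‖x‖/‖x'‖) 2, ← Real.rpow_mul hd0]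
    push_cast
    rw [show (2:ℝ) * (c/2) = c by ring, Real.div_rpow (norm_nonneg x) (norm_nonneg x')]
  have hdiff_formula : ∀ c : ℝ, ‖x‖ ^ (-c) - ‖x'‖ ^ (-c) = ‖x‖ ^ (-c) * (1 - u ^ (c/2)) := by
    intro c
    rw [mul_sub, mul_one, hu_eq c, Real.rpow_neg hρpos.le, Real.rpow_neg hρ'pos.le]
    have h1 : ‖x‖ ^ c ≠ 0 := (Real.rpow_pos_of_pos hρpos c).ne'
    have h2 : ‖x'‖ ^ c ≠ 0 := (Real.rpow_pos_of_pos hρ'pos c).ne'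
    field_simp
  -- main term lower bound
  have hmainW : L * (m * W) ≤ L - L' := by
    have h1 := hdiff_formula l
    rw [← hLdef, ← hL'def] at h1
    have h2 : m * W ≤ 1 - u ^ (l/2) := by
      have := bernMain hu0 hu1 (by positivity : (0:ℝ) < l/2)
      rw [← hmdef, ← hWdef] at this
      exact this
    rw [h1]
    exact mul_le_mul_of_nonneg_left h2 hLpos.le
  -- P difference upper bound
  have hEaW : P - P' ≤ P * ((l+2)/2 * W) := by
    have h1 := hdiff_formula (l + 2)
    rw [show -(l+2) = -l - 2 by ring] at h1
    rw [← hPdef, ← hP'def] at h1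
    have h2 : 1 - u ^ ((l+2)/2) ≤ (l+2)/2 * W := by
      have hb := bernU hu0 (by linarith only [hl] : 1 ≤ (l+2)/2)
      rw [← hWdef] at hb
      linarith only [hb]
    rw [h1]
    exact mul_le_mul_of_nonneg_left h2 hPpos.le
  -- expansion bounds
  have hexpand : ∀ y : EuclideanSpace ℝ (Fin (n+1)), R₀ ≤ ‖y‖ → 0 < ‖y‖ →
      |f y - (a₀ * ‖y‖ ^ (-l) + ∑ i, aa i * y i * ‖y‖ ^ (-l - 2))| ≤ C' * ‖y‖ ^ (-l - 2) := by
    intro y hy hy0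
    have heq : ‖y‖ ^ (-l) * (a₀ + ∑ i, aa i * y i / ‖y‖ ^ 2)
        = a₀ * ‖y‖ ^ (-l) + ∑ i, aa i * y i * ‖y‖ ^ (-l - 2) := by
      rw [mul_add, Finset.mul_sum]
      congr 1
      · ring
      · refine Finset.sum_congr rfl fun i _ => ?_
        rw [key_rpow hy0 l]
        ring
    rw [← heq]
    exact hC y hy
  set S : ℝ := ∑ i, aa i * x i * P with hSdef
  set S' : ℝ := ∑ i, aa i * x' i * P' with hS'def
  have hfx := hexpand x hxR₀ hρpos
  have hfx' := hexpand x' hρ'R₀ hρ'pos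
  rw [← hLdef, ← hPdef, ← hSdef] at hfx
  rw [← hL'def, ← hP'def, ← hS'def] at hfx'
  have hx'0 : x' 0 = 2*lam - x 0 := by rw [hx'upd]; simp
  have hx'i : ∀ i : Fin (n+1), i ≠ 0 → x' i = x i := by
    intro i hi; rw [hx'upd]; simp [Function.update_apply, hi]
  clear_value A m s x' L L' P P' u W S S'
  have hlow : f x - f x' ≥ a₀*(L - L') + (S - S') - C'*(P + P') := by
    have h1 := (abs_le.1 hfx).1
    have h2 := (abs_le.1 hfx').2
    linarith only [h1, h2]
  -- bound on S - S'
  have hDbound : S - S' ≥ -(A * ‖x‖ * (P - P') + 2*A*s*P') := by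
    have habs : |S - S'| ≤ A * ‖x‖ * (P - P') + 2*A*s*P' := by
      rw [hSdef, hS'def, ← Finset.sum_sub_distrib]
      calc |∑ i, (aa i * x i * P - aa i * x' i * P')|
          ≤ ∑ i, |aa i * x i * P - aa i * x' i * P'| := Finset.abs_sum_le_sum_abs _ _
        _ ≤ ∑ i, (|aa i| * (‖x‖ * (P - P')) + |aa i| * (2*s*P')) := by
            refine Finset.sum_le_sum fun i _ => ?_
            have heq : aa i * x i * P - aa i * x' i * P'
                = aa i * x i * (P - P') + aa i * (x i - x' i) * P' := by ring
            rw [heq]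
            refine (abs_add_le _ _).trans ?_
            rw [abs_mul, abs_mul, abs_mul, abs_mul]
            have hxi : |x i| ≤ ‖x‖ := euc_abs_le_norm x i
            have hdx : |x i - x' i| ≤ 2*s := by
              by_cases h : i = 0
              · rw [h, hx'0]
                rw [show x 0 - (2*lam - x 0) = -(2*s) by rw [hsdef]; ring, abs_neg,
                  abs_of_pos (by linarith only [hs])]
              · rw [hx'i i h]
                simp only [sub_self, abs_zero]
                linarith only [hs]
            have hPP'abs : |P - P'| = P - P' := abs_of_nonneg (by linarith only [hP'P])
            have hP'abs : |P'| = P' := abs_of_pos hP'pos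
            rw [hPP'abs, hP'abs]
            have hh1 : |aa i| * |x i| * (P - P') ≤ |aa i| * (‖x‖ * (P - P')) := by
              rw [mul_assoc]
              refine mul_le_mul_of_nonneg_left ?_ (abs_nonneg _)
              exact mul_le_mul_of_nonneg_right hxi (by linarith only [hP'P])
            have hh2 : |aa i| * |x i - x' i| * P' ≤ |aa i| * (2*s*P') := by
              rw [mul_assoc]
              refine mul_le_mul_of_nonneg_left ?_ (abs_nonneg _)
              exact mul_le_mul_of_nonneg_right hdx hP'pos.le
            linarith only [hh1, hh2]
        _ = A * (‖x‖ * (P - P')) + A * (2*s*P') := by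
            rw [Finset.sum_add_distrib, ← Finset.sum_mul, ← Finset.sum_mul, ← hAdef]
        _ = A * ‖x‖ * (P - P') + 2*A*s*P' := by ring
    linarith only [(abs_le.1 habs).1]
  -- the three error bounds
  have hE1 : A * ‖x‖ * (P - P') ≤ 1/4 * (a₀*m*L*W) := by
    have hcoef : A*‖x‖*P*((l+2)/2) ≤ 1/4*(a₀*m*L) := by
      rw [← hPL]
      nlinarith only [mul_le_mul_of_nonneg_right hRx (mul_nonneg (norm_nonneg x) hPpos.le)]
    calc A * ‖x‖ * (P - P') ≤ A * ‖x‖ * (P * ((l+2)/2 * W)) :=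
          mul_le_mul_of_nonneg_left hEaW (mul_nonneg hA0 (norm_nonneg x))
      _ = (A*‖x‖*P*((l+2)/2)) * W := by ring
      _ ≤ (1/4*(a₀*m*L)) * W := mul_le_mul_of_nonneg_right hcoef hW0
      _ = 1/4 * (a₀*m*L*W) := by ring
  have hE2 : 2*A*s*P' ≤ 1/4 * (a₀*m*L*W) := by
    rw [← mul_le_mul_iff_of_pos_right hρ'2pos]
    calc 2*A*s*P' * ‖x'‖^2 = 2*A*s*(P' * ‖x'‖^2) := by ring
      _ = 2*A*s*L' := by rw [hP'L']
      _ ≤ 1/4*(a₀*m*L)*(4*lam*s) := by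
          nlinarith only [mul_le_mul_of_nonneg_right hlamA (mul_nonneg hs.le hL'pos.le),
            mul_le_mul_of_nonneg_left hL'L (by nlinarith only [ha₀, hm0, hlampos, hs, mul_pos (mul_pos (mul_pos ha₀ hm0) hlampos) hs] : (0:ℝ) ≤ a₀*m*lam*s)]
      _ = 1/4 * (a₀*m*L*W) * ‖x'‖^2 := by rw [← hW2]; ring
  have hE3 : C'*(P + P') ≤ 1/4 * (a₀*m*L*W) := by
    have hcore : 2*C'*‖x'‖^2 ≤ a₀*m*(lam*s)*‖x‖^2 := by
      rw [hnorm']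
      nlinarith only [mul_le_mul_of_nonneg_right h4C (sq_nonneg ‖x‖),
        mul_le_mul_of_nonneg_right h16C (mul_pos hlampos hs).le]

    have hpos2 : 0 < ‖x‖^2 * ‖x'‖^2 := by positivity
    rw [← mul_le_mul_iff_of_pos_right hpos2]
    calc C'*(P + P') * (‖x‖^2 * ‖x'‖^2) ≤ C'*(2*P) * (‖x‖^2 * ‖x'‖^2) := by
          nlinarith only [mul_le_mul_of_nonneg_right
            (mul_le_mul_of_nonneg_left hP'P hC'0) hpos2.le]
      _ = 2*C'*‖x'‖^2 * (P * ‖x‖^2) := by ring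
      _ = 2*C'*‖x'‖^2 * L := by rw [hPL]
      _ ≤ a₀*m*(lam*s)*‖x‖^2 * L := mul_le_mul_of_nonneg_right hcore hLpos.le
      _ = 1/4*(a₀*m*L)*(4*lam*s) * ‖x‖^2 := by ring
      _ = 1/4 * (a₀*m*L*W) * (‖x‖^2 * ‖x'‖^2) := by rw [← hW2]; ring
  have hMpos : 0 < a₀*m*L*W := mul_pos (mul_pos (mul_pos ha₀ hm0) hLpos) hWpos
  have hmain : a₀*(L - L') ≥ a₀*m*L*W := by
    have h0 := mul_le_mul_of_nonneg_left hmainW ha₀.le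
    calc a₀*(L-L') ≥ a₀*(L*(m*W)) := h0
      _ = a₀*m*L*W := by ring
  have hfinal : f x - f x' > 0 := by
    have h1 : f x - f x' ≥ a₀*m*L*W - (A*‖x‖*(P - P') + 2*A*s*P') - C'*(P+P') := by
      linarith only [hlow, hDbound, hmain]
    linarith only [h1, hE1, hE2, hE3, hMpos]
  linarith only [hfinal]

theorem stmt_13 (n : ℕ) (hn : 1 ≤ n) (l : ℝ) (hl : 0 < l)
    (f : EuclideanSpace ℝ (Fin (n + 1)) → ℝ) (R₁ : ℝ)
    (hreg : ContDiffOn ℝ 2 f {x : EuclideanSpace ℝ (Fin (n + 1)) | R₁ < ‖x‖})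
    (a₀ : ℝ) (ha₀ : 0 < a₀) (aa : Fin (n + 1) → ℝ)
    (hexp : HarmonicExpansion n l f a₀ aa) :
    ∃ lam₀ > (0 : ℝ), ∃ R > (0 : ℝ), ∀ lam ≥ lam₀,
      ∀ x : EuclideanSpace ℝ (Fin (n + 1)), x 0 < lam → R ≤ ‖x‖ →
        f (reflHyp n lam x) < f x := by
  classical
  obtain ⟨C0, R₀, hR₀pos, hC⟩ := hexp
  set C' : ℝ := max C0 0 with hC'def
  have hC'0 : 0 ≤ C' := le_max_right _ _
  have hCC' : C0 ≤ C' := le_max_left _ _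
  set A : ℝ := ∑ i, |aa i| with hAdef
  have hA0 : 0 ≤ A := Finset.sum_nonneg fun i _ => abs_nonneg _
  set m : ℝ := min 1 (l/2) with hmdef
  have hm0 : 0 < m := lt_min one_pos (by positivity)
  have ham : 0 < a₀ * m := mul_pos ha₀ hm0
  have hla : 0 < l * a₀ := mul_pos hl ha₀
  set σ : ℝ := C' / (l * a₀) + 1 with hσdef
  have hσ0 : 0 < σ := by
    have h0 : 0 ≤ C' / (l * a₀) := by positivity
    rw [hσdef]; linarith only [h0]
  clear_value C' A m σ
  set lam₀ : ℝ := 2*σ + 4*A/(a₀*m) + Real.sqrt (8*C'/(a₀*m)) + 1 with hlam₀def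
  set R : ℝ := max (max R₀ (R₁+1)) (2*A*(l+2)/(a₀*m) + Real.sqrt (16*C'/(a₀*m))) + 1
    with hRdef
  have hsq1 : (0:ℝ) ≤ Real.sqrt (8*C'/(a₀*m)) := Real.sqrt_nonneg _
  have hsq2 : (0:ℝ) ≤ Real.sqrt (16*C'/(a₀*m)) := Real.sqrt_nonneg _
  have hdiv1 : (0:ℝ) ≤ 4*A/(a₀*m) := by positivity
  have hdiv2 : (0:ℝ) ≤ 2*A*(l+2)/(a₀*m) := by
    have h1 : (0:ℝ) ≤ 2*A*(l+2) := by nlinarith only [hA0, hl]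
    positivity
  have hmax1 : R₀ ≤ max R₀ (R₁+1) := le_max_left _ _
  have hmax2 : R₁ + 1 ≤ max R₀ (R₁+1) := le_max_right _ _
  have hmax3 : max R₀ (R₁+1)
      ≤ max (max R₀ (R₁+1)) (2*A*(l+2)/(a₀*m) + Real.sqrt (16*C'/(a₀*m))) := le_max_left _ _
  have hmax4 : 2*A*(l+2)/(a₀*m) + Real.sqrt (16*C'/(a₀*m))
      ≤ max (max R₀ (R₁+1)) (2*A*(l+2)/(a₀*m) + Real.sqrt (16*C'/(a₀*m))) := le_max_right _ _
  have hlam₀pos : 0 < lam₀ := by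
    rw [hlam₀def]; linarith only [hσ0, hdiv1, hsq1]
  have hRpos : 0 < R := by
    rw [hRdef]; linarith only [hR₀pos, hmax1, hmax3]
  refine ⟨lam₀, hlam₀pos, R, hRpos, ?_⟩
  intro lam hlam x hx0 hxR
  have hlampos : 0 < lam := lt_of_lt_of_le hlam₀pos hlam
  have hρpos : 0 < ‖x‖ := lt_of_lt_of_le hRpos hxR
  have hρR₀ : R₀ ≤ ‖x‖ := by
    rw [hRdef] at hxR; linarith only [hxR, hmax1, hmax3]
  have hρR₁ : R₁ < ‖x‖ := by
    rw [hRdef] at hxR; linarith only [hxR, hmax2, hmax3]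
  have hlam2σ : 2*σ ≤ lam := by
    rw [hlam₀def] at hlam; linarith only [hlam, hdiv1, hsq1]
  show f (WithLp.toLp 2 (Function.update x 0 (2 * lam - x 0))) < f x
  by_cases hcase : σ ≤ x 0
  · -- Case 1
    refine case1 hl ha₀ hreg (fun y hy => (hC y hy).2.1) x lam hx0 ?_ ?_ hρR₀ hρR₁
    · have h1 : C0 / (l*a₀) ≤ C' / (l*a₀) := by gcongr
      rw [hσdef] at hcase
      linarith only [h1, hcase]
    · linarith only [hcase, hσ0]
  · -- Case 2
    push_neg at hcase
    have hCexp : ∀ y : EuclideanSpace ℝ (Fin (n+1)), R₀ ≤ ‖y‖ →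
        |f y - ‖y‖ ^ (-l) * (a₀ + ∑ i, aa i * y i / ‖y‖ ^ 2)| ≤ C' * ‖y‖ ^ (-l - 2) :=
      fun y hy => le_trans ((hC y hy).1)
        (mul_le_mul_of_nonneg_right hCC' (Real.rpow_nonneg (norm_nonneg y) _))
    have hRA : 2*A*(l+2)/(a₀*m) ≤ ‖x‖ := by
      rw [hRdef] at hxR; linarith only [hxR, hmax4, hsq2]
    have hRsq : Real.sqrt (16*C'/(a₀*m)) ≤ ‖x‖ := by
      rw [hRdef] at hxR; linarith only [hxR, hmax4, hdiv2]
    have hlamA' : 4*A/(a₀*m) ≤ lam := by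
      rw [hlam₀def] at hlam; linarith only [hlam, hσ0, hsq1]
    have hlamsq : Real.sqrt (8*C'/(a₀*m)) ≤ lam := by
      rw [hlam₀def] at hlam; linarith only [hlam, hσ0, hdiv1]
    have hRx : 2*A*(l+2) ≤ a₀*m*‖x‖ := by
      have := (div_le_iff₀ ham).1 hRA
      linarith only [this]
    have hlamA : 2*A ≤ a₀*m*lam := by
      have := (div_le_iff₀ ham).1 hlamA'
      linarith only [this, hA0]
    have hlamsq' : 8*C'/(a₀*m) ≤ lam^2 := by
      calc 8*C'/(a₀*m) = Real.sqrt (8*C'/(a₀*m))^2 := (Real.sq_sqrt (by positivity)).symm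
        _ ≤ lam^2 := pow_le_pow_left₀ hsq1 hlamsq 2
    have hRsq' : 16*C'/(a₀*m) ≤ ‖x‖^2 := by
      calc 16*C'/(a₀*m) = Real.sqrt (16*C'/(a₀*m))^2 := (Real.sq_sqrt (by positivity)).symm
        _ ≤ ‖x‖^2 := pow_le_pow_left₀ hsq2 hRsq 2
    have h16C : 16*C' ≤ a₀*m*‖x‖^2 := by
      have := (div_le_iff₀ ham).1 hRsq'
      linarith only [this]
    have h4C : 4*C' ≤ a₀*m*(lam*(lam - x 0)) := by
      have h3 : 8*C' ≤ lam^2*(a₀*m) := (div_le_iff₀ ham).1 hlamsq'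
      have hs2 : lam/2 ≤ lam - x 0 := by
        rw [hσdef] at hcase hlam2σ
        linarith only [hcase, hlam2σ]
      have h4 := mul_le_mul_of_nonneg_left hs2 (mul_pos ham hlampos).le
      nlinarith only [h3, h4]
    exact case2 hl ha₀ hC'0 aa hCexp x lam hx0 hlampos hρR₀ hρpos
      (by rw [hAdef, hmdef] at hRx; exact hRx)
      (by rw [hAdef, hmdef] at hlamA; exact hlamA)
      (by rw [hmdef] at h4C; exact h4C)
      (by rw [hmdef] at h16C; exact h16C)
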